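/- Collapsing of intermediate exceptional rays between consecutive E-nodes: For every 1 ≤ j ≤ n−2 and every integer l with i_j ≤ l ≤ i_{j+1}, one has (i_{j+1} − i_j)·[E_l] = (i_{j+1} − l)·[E_{i_j}] + (l − i_j)·[E_{i_{j+1}}]; consequently the cone generated by the set {[E_l] : i_j ≤ l ≤ i_{j+1}} equals ℝ≥0⟨[E_{i_j}], [E_{i_{j+1}}]⟩. -/

import Mathlib

/-- The divisorial valuation ray `[E_l] = ∑_{k : i_k < l} i_k e_k + l·∑_{k : i_k ≥ l} e_k`. -/
noncomputable def El (n : ℕ) (i : ℕ → ℤ) (l : ℤ) : Fin (n + 1) → ℝ :=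
  fun k => if i (k : ℕ) < l then (i (k : ℕ) : ℝ) else (l : ℝ)

/-- The cone `ℝ≥0⟨x, y⟩ = {αx + βy : α, β ≥ 0}`. -/
def cone2 {m : ℕ} (x y : Fin m → ℝ) : Set (Fin m → ℝ) :=
  {z | ∃ α β : ℝ, 0 ≤ α ∧ 0 ≤ β ∧ z = α • x + β • y}

/-- The cone generated by a set `S`: all finite nonnegative combinations of elements of `S`. -/
def coneGen {m : ℕ} (S : Set (Fin m → ℝ)) : Set (Fin m → ℝ) :=
  {z | ∃ (F : Finset (Fin m → ℝ)) (c : (Fin m → ℝ) → ℝ),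
        ↑F ⊆ S ∧ (∀ w ∈ F, 0 ≤ c w) ∧ z = ∑ w ∈ F, c w • w}

lemma sum_mem_cone2 {m : ℕ} (x y : Fin m → ℝ) (F : Finset (Fin m → ℝ)) (c : (Fin m → ℝ) → ℝ)
    (hc : ∀ w ∈ F, 0 ≤ c w) (hF : ∀ w ∈ F, w ∈ cone2 x y) :
    (∑ w ∈ F, c w • w) ∈ cone2 x y := by
  classical
  induction F using Finset.induction_on with
  | empty => exact ⟨0, 0, le_refl _, le_refl _, by simp⟩
  | @insert a s ha ih =>
    obtain ⟨α, β, hα, hβ, hz⟩ := ih (fun w hw => hc w (Finset.mem_insert_of_mem hw))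
      (fun w hw => hF w (Finset.mem_insert_of_mem hw))
    obtain ⟨α', β', hα', hβ', hw⟩ := hF a (Finset.mem_insert_self a s)
    have hca := hc a (Finset.mem_insert_self a s)
    refine ⟨c a * α' + α, c a * β' + β,
      add_nonneg (mul_nonneg hca hα') hα, add_nonneg (mul_nonneg hca hβ') hβ, ?_⟩
    rw [Finset.sum_insert ha, hz, hw, smul_add, smul_smul, smul_smul, add_smul, add_smul]
    abel

theorem collapsing_intermediate_E_rays
    (n : ℕ) (hn : 4 ≤ n) (i : ℕ → ℤ)
    (hi0 : i 0 = 0)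
    (hmono : ∀ k, k < n → i k < i (k + 1))
    (hgcd : Finset.gcd (Finset.Icc 1 n) i = 1)
    (j : ℕ) (hj1 : 1 ≤ j) (hjn : j ≤ n - 2) :
    (∀ l : ℤ, i j ≤ l → l ≤ i (j + 1) →
      ((i (j + 1) : ℝ) - (i j : ℝ)) • El n i l
        = ((i (j + 1) : ℝ) - (l : ℝ)) • El n i (i j)
          + ((l : ℝ) - (i j : ℝ)) • El n i (i (j + 1)))
    ∧ coneGen {z | ∃ l : ℤ, i j ≤ l ∧ l ≤ i (j + 1) ∧ z = El n i l}
        = cone2 (El n i (i j)) (El n i (i (j + 1))) := by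
  classical
  have hjn' : j + 1 < n := by omega
  have hmono' : ∀ a b : ℕ, a ≤ b → b ≤ n → i a ≤ i b := by
    intro a b hab hbn
    induction b with
    | zero =>
      have : a = 0 := by omega
      simp [this]
    | succ b ih =>
      rcases Nat.lt_or_ge a (b + 1) with h | h
      · exact (ih (by omega) (by omega)).trans (hmono b (by omega)).le
      · have : a = b + 1 := by omega
        simp [this]
  have hstrict : i j < i (j + 1) := hmono j (by omega)
  have hgap : ∀ k : ℕ, k ≤ n → i k ≤ i j ∨ i (j + 1) ≤ i k := by
    intro k hk
    rcases le_or_gt k j with h | h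
    · exact Or.inl (hmono' k j h (by omega))
    · exact Or.inr (hmono' (j + 1) k h hk)
  have key : ∀ l : ℤ, i j ≤ l → l ≤ i (j + 1) →
      ((i (j + 1) : ℝ) - (i j : ℝ)) • El n i l
        = ((i (j + 1) : ℝ) - (l : ℝ)) • El n i (i j)
          + ((l : ℝ) - (i j : ℝ)) • El n i (i (j + 1)) := by
    intro l hl1 hl2
    funext k
    have hkn : (k : ℕ) ≤ n := Nat.lt_succ_iff.mp k.isLt
    simp only [Pi.smul_apply, Pi.add_apply, smul_eq_mul, El]
    rcases hgap k hkn with hle | hge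
    · rcases lt_or_eq_of_le hle with hlt | heq
      · rw [if_pos (lt_of_lt_of_le hlt hl1), if_pos hlt,
          if_pos (lt_of_lt_of_le hlt (le_of_lt hstrict))]
        ring
      · have hx : ((i (k : ℕ) : ℤ) : ℝ) = ((i j : ℤ) : ℝ) := by exact_mod_cast heq
        rw [if_neg (by omega : ¬ i (k : ℕ) < i j), if_pos (by omega : i (k : ℕ) < i (j + 1))]
        by_cases hcl : i (k : ℕ) < l
        · rw [if_pos hcl, hx]; ring
        · rw [if_neg hcl]
          have hleq : (l : ℝ) = ((i j : ℤ) : ℝ) := by exact_mod_cast (by omega : l = i j)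
          rw [hleq, hx]; ring
    · rw [if_neg (by omega : ¬ i (k : ℕ) < l), if_neg (by omega : ¬ i (k : ℕ) < i j),
        if_neg (by omega : ¬ i (k : ℕ) < i (j + 1))]
      push_cast
      ring
  refine ⟨key, ?_⟩
  have hΔ : (0 : ℝ) < (i (j + 1) : ℝ) - (i j : ℝ) := by
    have : ((i j : ℤ) : ℝ) < ((i (j + 1) : ℤ) : ℝ) := by exact_mod_cast hstrict
    linarith
  ext z
  constructor
  · rintro ⟨F, c, hFS, hc, rfl⟩
    apply sum_mem_cone2 _ _ _ _ hc
    intro w hw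
    obtain ⟨l, hl1, hl2, rfl⟩ := hFS hw
    refine ⟨((i (j + 1) : ℝ) - (l : ℝ)) / ((i (j + 1) : ℝ) - (i j : ℝ)),
      ((l : ℝ) - (i j : ℝ)) / ((i (j + 1) : ℝ) - (i j : ℝ)), ?_, ?_, ?_⟩
    · apply div_nonneg _ hΔ.le
      have : ((l : ℤ) : ℝ) ≤ ((i (j + 1) : ℤ) : ℝ) := by exact_mod_cast hl2
      linarith
    · apply div_nonneg _ hΔ.le
      have : ((i j : ℤ) : ℝ) ≤ ((l : ℤ) : ℝ) := by exact_mod_cast hl1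
      linarith
    · have h := key l hl1 hl2
      funext k
      have hk := congrFun h k
      simp only [Pi.smul_apply, Pi.add_apply, smul_eq_mul] at hk ⊢
      field_simp
      linarith [hk]
  · rintro ⟨α, β, hα, hβ, rfl⟩
    have hxy : El n i (i j) ≠ El n i (i (j + 1)) := by
      intro h
      have hk := congrFun h ⟨j + 1, by omega⟩
      simp only [El] at hk
      rw [if_neg (by omega : ¬ i (j + 1) < i j), if_neg (lt_irrefl _)] at hk
      have : i j = i (j + 1) := by exact_mod_cast hk
      omega
    refine ⟨{El n i (i j), El n i (i (j + 1))},
      fun w => if w = El n i (i j) then α else β, ?_, ?_, ?_⟩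
    · intro w hw
      simp only [Finset.coe_insert, Finset.coe_singleton, Set.mem_insert_iff,
        Set.mem_singleton_iff] at hw
      rcases hw with rfl | rfl
      · exact ⟨i j, le_refl _, hstrict.le, rfl⟩
      · exact ⟨i (j + 1), hstrict.le, le_refl _, rfl⟩
    · intro w _
      dsimp only
      split_ifs <;> assumption
    · rw [Finset.sum_pair hxy]
      dsimp only
      rw [if_pos rfl, if_neg (Ne.symm hxy)]
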